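/- Let V be an isometry on a Hilbert space H, with Wold decomposition H = H^U ⊕ H^S where H^U = ∩_{n≥0} VⁿH and H^S = ⊕_{n≥0} Vⁿ(ker V*). Let ({Vⁿ}, {S_μ}) be a Toeplitz representation of a self-similar graph (ℕ, E) on H satisfying assumption (A). Then H^U and H^S each reduce every operator S_μ (μ ∈ E⁰ ∪ E¹). -/

import Mathlib

open ContinuousLinearMap

/-- A subspace `M` reduces an operator `A` if both `A` and `A*` leave `M` invariant. -/
def ReducesOp {H : Type*} [NormedAddCommGroup H] [InnerProductSpace ℂ H]
    [CompleteSpace H] (A : H →L[ℂ] H) (M : Submodule ℂ H) : Prop :=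
  Submodule.map (A : H →ₗ[ℂ] H) M ≤ M ∧ Submodule.map ((adjoint A : H →L[ℂ] H) : H →ₗ[ℂ] H) M ≤ M

section Aux

open scoped InnerProductSpace

variable {H : Type*} [NormedAddCommGroup H] [InnerProductSpace ℂ H] [CompleteSpace H]

lemma star_pow_mul_pow (Vop : H →L[ℂ] H) (hViso : adjoint Vop * Vop = 1) (n : ℕ) :
    star Vop ^ n * Vop ^ n = 1 := by
  induction n with
  | zero => simp
  | succ n ih =>
    have hstar : star Vop * Vop = 1 := by rw [star_eq_adjoint]; exact hViso
    rw [pow_succ (star Vop), pow_succ' Vop, mul_assoc, ← mul_assoc (star Vop), hstar,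
      one_mul, ih]

lemma adjoint_pow (Vop : H →L[ℂ] H) (n : ℕ) :
    adjoint (Vop ^ n) = star Vop ^ n := by
  rw [← star_eq_adjoint, star_pow]

lemma adjoint_pow_mul_pow (Vop : H →L[ℂ] H) (hViso : adjoint Vop * Vop = 1) (n : ℕ) :
    adjoint (Vop ^ n) * Vop ^ n = 1 := by
  rw [adjoint_pow]; exact star_pow_mul_pow Vop hViso n

lemma ker_adjoint_eq_orth_range (A : H →L[ℂ] H) :
    LinearMap.ker ((adjoint A : H →L[ℂ] H) : H →ₗ[ℂ] H) = (LinearMap.range (A : H →ₗ[ℂ] H))ᗮ := by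
  ext x
  simp only [LinearMap.mem_ker, Submodule.mem_orthogonal, ContinuousLinearMap.coe_coe]
  constructor
  · intro hx u hu
    obtain ⟨y, rfl⟩ := LinearMap.mem_range.mp hu
    rw [ContinuousLinearMap.coe_coe, ← adjoint_inner_right, hx, inner_zero_right]
  · intro hx
    refine ext_inner_left ℂ fun v => ?_
    rw [adjoint_inner_right, inner_zero_right]
    exact hx _ (LinearMap.mem_range.mpr ⟨v, rfl⟩)

lemma reducesOp_orthogonal {A : H →L[ℂ] H} {M : Submodule ℂ H}
    (h1 : Submodule.map (A : H →ₗ[ℂ] H) M ≤ M)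
    (h2 : Submodule.map ((adjoint A : H →L[ℂ] H) : H →ₗ[ℂ] H) M ≤ M) :
    ReducesOp A Mᗮ := by
  constructor
  · rintro _ ⟨x, hx, rfl⟩
    rw [Submodule.mem_orthogonal]
    intro u hu
    rw [ContinuousLinearMap.coe_coe, ← adjoint_inner_left]
    exact (Submodule.mem_orthogonal _ _).mp hx _ (h2 ⟨u, hu, rfl⟩)
  · rintro _ ⟨x, hx, rfl⟩
    rw [Submodule.mem_orthogonal]
    intro u hu
    rw [ContinuousLinearMap.coe_coe, ← adjoint_inner_left, adjoint_adjoint]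
    exact (Submodule.mem_orthogonal _ _).mp hx _ (h1 ⟨u, hu, rfl⟩)

end Aux

theorem wold_pieces_reduce {V E : Type*} [Fintype V] [Fintype E] [DecidableEq V]
    (src rng : E → V) (φV : V → V) (φE : E → E)
    (hφV : Function.Bijective φV) (hφE : Function.Bijective φE)
    (hsrc : ∀ e, src (φE e) = φV (src e))
    (hrng : ∀ e, rng (φE e) = φV (rng e))
    (res : ℕ → E → ℕ)
    (hres_zero : ∀ e, res 0 e = 0)
    (hres_add : ∀ p q e, res (p + q) e = res p (φE^[q] e) + res q e)
    (hres_src : ∀ p e, φV^[res p e] (src e) = φV^[p] (src e))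
    (hA : ∀ e : E, Filter.Tendsto (fun n => res n e) Filter.atTop Filter.atTop)
    {H : Type*} [NormedAddCommGroup H] [InnerProductSpace ℂ H] [CompleteSpace H]
    (Vop : H →L[ℂ] H) (Sop : V → H →L[ℂ] H) (Top : E → H →L[ℂ] H)
    (hViso : adjoint Vop * Vop = 1)
    (hSidem : ∀ v, Sop v * Sop v = Sop v)
    (hSsa : ∀ v, adjoint (Sop v) = Sop v)
    (hSorth : ∀ v w, v ≠ w → Sop v * Sop w = 0)
    (htck2 : ∀ e, adjoint (Top e) * Top e = Sop (src e))
    (htck3 : ∀ v, (Sop v - ∑ e ∈ Finset.univ.filter (fun e => rng e = v),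
        Top e * adjoint (Top e)).IsPositive)
    (hssv : ∀ (n : ℕ) (v : V), Vop ^ n * Sop v = Sop (φV^[n] v) * Vop ^ n)
    (hsse : ∀ (n : ℕ) (e : E), Vop ^ n * Top e = Top (φE^[n] e) * Vop ^ res n e)
    (hncv : ∀ (n : ℕ) (v : V),
        adjoint (Vop ^ n) * Sop (φV^[n] v) = Sop v * adjoint (Vop ^ n))
    (hnce : ∀ (n : ℕ) (e : E),
        adjoint (Vop ^ n) * Top (φE^[n] e) = Top e * adjoint (Vop ^ res n e)) :
    (∀ v : V, ReducesOp (Sop v) (⨅ n : ℕ, LinearMap.range ((Vop ^ n : H →L[ℂ] H) : H →ₗ[ℂ] H)) ∧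
        ReducesOp (Sop v)
          ((⨆ n : ℕ, Submodule.map ((Vop ^ n : H →L[ℂ] H) : H →ₗ[ℂ] H)
              (LinearMap.ker ((adjoint Vop : H →L[ℂ] H) : H →ₗ[ℂ] H))).topologicalClosure)) ∧
    (∀ e : E, ReducesOp (Top e) (⨅ n : ℕ, LinearMap.range ((Vop ^ n : H →L[ℂ] H) : H →ₗ[ℂ] H)) ∧
        ReducesOp (Top e)
          ((⨆ n : ℕ, Submodule.map ((Vop ^ n : H →L[ℂ] H) : H →ₗ[ℂ] H)
              (LinearMap.ker ((adjoint Vop : H →L[ℂ] H) : H →ₗ[ℂ] H))).topologicalClosure)) := by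
  have hpow := adjoint_pow_mul_pow Vop hViso
  set K : Submodule ℂ H := LinearMap.ker ((adjoint Vop : H →L[ℂ] H) : H →ₗ[ℂ] H) with hKdef
  set HU : Submodule ℂ H := ⨅ n : ℕ, LinearMap.range ((Vop ^ n : H →L[ℂ] H) : H →ₗ[ℂ] H) with hHUdef
  -- ranges are nested
  have hrange_mono : ∀ {a b : ℕ}, a ≤ b →
      LinearMap.range ((Vop ^ b : H →L[ℂ] H) : H →ₗ[ℂ] H) ≤ LinearMap.range ((Vop ^ a : H →L[ℂ] H) : H →ₗ[ℂ] H) := by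
    intro a b hab x hx
    obtain ⟨y, rfl⟩ := LinearMap.mem_range.mp hx
    refine LinearMap.mem_range.mpr ⟨(Vop ^ (b - a)) y, ?_⟩
    simp only [ContinuousLinearMap.coe_coe]
    rw [← ContinuousLinearMap.mul_apply, ← pow_add, Nat.add_sub_cancel' hab]
  -- S_v maps HU into HU
  have hSU : ∀ v, Submodule.map ((Sop v : H →L[ℂ] H) : H →ₗ[ℂ] H) HU ≤ HU := by
    intro v
    rintro _ ⟨h, hh, rfl⟩
    rw [hHUdef, Submodule.mem_iInf]
    intro n
    obtain ⟨w, hw⟩ := (hφV.iterate n).2 v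
    obtain ⟨g, hg⟩ := LinearMap.mem_range.mp ((Submodule.mem_iInf _).mp hh n)
    refine LinearMap.mem_range.mpr ⟨Sop w g, ?_⟩
    calc (Vop ^ n) (Sop w g) = (Vop ^ n * Sop w) g := rfl
      _ = (Sop (φV^[n] w) * Vop ^ n) g := by rw [hssv]
      _ = Sop v ((Vop ^ n) g) := by rw [hw]; rfl
      _ = Sop v h := by rw [← hg]; rfl
  -- T_e maps HU into HU
  have hTU : ∀ e, Submodule.map ((Top e : H →L[ℂ] H) : H →ₗ[ℂ] H) HU ≤ HU := by
    intro e
    rintro _ ⟨h, hh, rfl⟩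
    rw [hHUdef, Submodule.mem_iInf]
    intro n
    obtain ⟨f, hf⟩ := (hφE.iterate n).2 e
    obtain ⟨g, hg⟩ := LinearMap.mem_range.mp ((Submodule.mem_iInf _).mp hh (res n f))
    refine LinearMap.mem_range.mpr ⟨Top f g, ?_⟩
    calc (Vop ^ n) (Top f g) = (Vop ^ n * Top f) g := rfl
      _ = (Top (φE^[n] f) * Vop ^ res n f) g := by rw [hsse]
      _ = Top e ((Vop ^ res n f) g) := by rw [hf]; rfl
      _ = Top e h := by rw [← hg]; rfl
  -- (T_e)* maps HU into HU, using assumption (A) and periodicity of φE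
  have hTUadj : ∀ e, Submodule.map ((adjoint (Top e) : H →L[ℂ] H) : H →ₗ[ℂ] H) HU ≤ HU := by
    intro e
    rintro _ ⟨h, hh, rfl⟩
    rw [hHUdef, Submodule.mem_iInf]
    intro m
    set p : Equiv.Perm E := Equiv.ofBijective φE hφE with hpdef
    have hpcoe : ∀ k, φE^[k] = ⇑(p ^ k) := fun k => Equiv.Perm.iterate_eq_pow p k
    have hNpos : 0 < orderOf p := orderOf_pos p
    obtain ⟨n₀, hn₀⟩ := Filter.eventually_atTop.mp (Filter.tendsto_atTop.mp (hA e) m)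
    set n : ℕ := orderOf p * n₀ with hndef
    have hnge : n₀ ≤ n := Nat.le_mul_of_pos_left n₀ hNpos
    have hiter : φE^[n] e = e := by
      rw [hpcoe, hndef, pow_mul, pow_orderOf_eq_one, one_pow, Equiv.Perm.coe_one, id_eq]
    have h0 := hnce n e
    rw [hiter] at h0
    have key : adjoint (Top e) * Vop ^ n = Vop ^ res n e * adjoint (Top e) := by
      have := congrArg star h0
      simpa only [star_mul, star_eq_adjoint, adjoint_adjoint] using this
    obtain ⟨g, hg⟩ := LinearMap.mem_range.mp ((Submodule.mem_iInf _).mp hh n)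
    refine hrange_mono (hn₀ n hnge) (LinearMap.mem_range.mpr ⟨adjoint (Top e) g, ?_⟩)
    calc (Vop ^ res n e) (adjoint (Top e) g) = (Vop ^ res n e * adjoint (Top e)) g := rfl
      _ = (adjoint (Top e) * Vop ^ n) g := by rw [key]
      _ = adjoint (Top e) ((Vop ^ n) g) := rfl
      _ = adjoint (Top e) h := by rw [← hg]; rfl
  -- each range is complete
  have hcs : ∀ n, CompleteSpace (LinearMap.range ((Vop ^ n : H →L[ℂ] H) : H →ₗ[ℂ] H)) := by
    intro n
    have hnorm : ∀ x, ‖(Vop ^ n) x‖ = ‖x‖ :=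
      (norm_map_iff_adjoint_comp_self (Vop ^ n)).mpr (hpow n)
    have hiso : Isometry ⇑(Vop ^ n) := AddMonoidHomClass.isometry_of_norm _ hnorm
    have hcl : IsClosed ((LinearMap.range ((Vop ^ n : H →L[ℂ] H) : H →ₗ[ℂ] H) : Submodule ℂ H) : Set H) := by
      rw [LinearMap.coe_range]
      exact hiso.isClosedEmbedding.isClosed_range
    exact hcl.completeSpace_coe
  -- the two suprema agree
  have hsup_eq : (⨆ n : ℕ, Submodule.map ((Vop ^ n : H →L[ℂ] H) : H →ₗ[ℂ] H) K)
      = ⨆ n : ℕ, LinearMap.ker ((adjoint (Vop ^ n) : H →L[ℂ] H) : H →ₗ[ℂ] H) := by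
    apply le_antisymm
    · refine iSup_le fun n => ?_
      refine le_trans ?_ (le_iSup (fun k => LinearMap.ker ((adjoint (Vop ^ k) : H →L[ℂ] H) : H →ₗ[ℂ] H)) (n + 1))
      rintro _ ⟨x, hx, rfl⟩
      rw [LinearMap.mem_ker]
      simp only [ContinuousLinearMap.coe_coe]
      have e1 : ((star Vop) ^ n) ((Vop ^ n) x) = x := by
        rw [← ContinuousLinearMap.mul_apply, star_pow_mul_pow Vop hViso n,
          ContinuousLinearMap.one_apply]
      rw [adjoint_pow, pow_succ', ContinuousLinearMap.mul_apply, e1, star_eq_adjoint]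
      exact LinearMap.mem_ker.mp hx
    · refine iSup_le fun n => ?_
      induction n with
      | zero =>
        intro x hx
        have hx0 : x = 0 := by
          have := LinearMap.mem_ker.mp hx
          simp only [ContinuousLinearMap.coe_coe] at this
          rwa [adjoint_pow, pow_zero, ContinuousLinearMap.one_apply] at this
        rw [hx0]; exact zero_mem _
      | succ n ih =>
        intro x hx
        have hx' : adjoint (Vop ^ (n + 1)) x = 0 := LinearMap.mem_ker.mp hx
        have hVx : adjoint Vop x ∈ LinearMap.ker ((adjoint (Vop ^ n) : H →L[ℂ] H) : H →ₗ[ℂ] H) := by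
          rw [LinearMap.mem_ker, ContinuousLinearMap.coe_coe, adjoint_pow, ← star_eq_adjoint,
            ← ContinuousLinearMap.mul_apply, ← pow_succ, ← adjoint_pow]
          exact hx'
        have h1 : x - Vop (adjoint Vop x) ∈ K := by
          rw [hKdef, LinearMap.mem_ker, ContinuousLinearMap.coe_coe, map_sub]
          have : adjoint Vop (Vop (adjoint Vop x)) = adjoint Vop x := by
            rw [← ContinuousLinearMap.mul_apply, hViso, ContinuousLinearMap.one_apply]
          rw [this, sub_self]
        have hmem1 : x - Vop (adjoint Vop x) ∈ ⨆ k : ℕ, Submodule.map ((Vop ^ k : H →L[ℂ] H) : H →ₗ[ℂ] H) K :=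
          le_iSup (fun k => Submodule.map ((Vop ^ k : H →L[ℂ] H) : H →ₗ[ℂ] H) K) 0
            ⟨x - Vop (adjoint Vop x), h1, by simp⟩
        have hmem2 : Vop (adjoint Vop x) ∈ ⨆ k : ℕ, Submodule.map ((Vop ^ k : H →L[ℂ] H) : H →ₗ[ℂ] H) K := by
          have hmap : Submodule.map (Vop : H →ₗ[ℂ] H) (⨆ k : ℕ, Submodule.map ((Vop ^ k : H →L[ℂ] H) : H →ₗ[ℂ] H) K)
              ≤ ⨆ k : ℕ, Submodule.map ((Vop ^ k : H →L[ℂ] H) : H →ₗ[ℂ] H) K := by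
            rw [Submodule.map_iSup]
            refine iSup_le fun k => ?_
            rintro _ ⟨_, ⟨z, hz, rfl⟩, rfl⟩
            exact le_iSup (fun j => Submodule.map ((Vop ^ j : H →L[ℂ] H) : H →ₗ[ℂ] H) K) (k + 1)
              ⟨z, hz, by simp only [ContinuousLinearMap.coe_coe]; rw [pow_succ', ContinuousLinearMap.mul_apply]⟩
          exact hmap ⟨adjoint Vop x, ih hVx, rfl⟩
        have hsum := add_mem hmem1 hmem2
        rwa [sub_add_cancel] at hsum
  -- the closure of the supremum is the orthogonal complement of HU
  have hHS : (⨆ n : ℕ, Submodule.map ((Vop ^ n : H →L[ℂ] H) : H →ₗ[ℂ] H) K).topologicalClosure = HUᗮ := by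
    have hKn : ∀ n : ℕ, (LinearMap.range ((Vop ^ n : H →L[ℂ] H) : H →ₗ[ℂ] H))ᗮᗮ = LinearMap.range ((Vop ^ n : H →L[ℂ] H) : H →ₗ[ℂ] H) := by
      intro n
      haveI := hcs n
      exact Submodule.orthogonal_orthogonal _
    have h2 : (⨆ n : ℕ, Submodule.map ((Vop ^ n : H →L[ℂ] H) : H →ₗ[ℂ] H) K)
        = ⨆ n : ℕ, (LinearMap.range ((Vop ^ n : H →L[ℂ] H) : H →ₗ[ℂ] H))ᗮ := by
      rw [hsup_eq]
      exact iSup_congr fun n => ker_adjoint_eq_orth_range _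
    calc (⨆ n : ℕ, Submodule.map ((Vop ^ n : H →L[ℂ] H) : H →ₗ[ℂ] H) K).topologicalClosure
        = (⨆ n : ℕ, (LinearMap.range ((Vop ^ n : H →L[ℂ] H) : H →ₗ[ℂ] H))ᗮ).topologicalClosure := by rw [h2]
      _ = (⨆ n : ℕ, (LinearMap.range ((Vop ^ n : H →L[ℂ] H) : H →ₗ[ℂ] H))ᗮ)ᗮᗮ :=
          (Submodule.orthogonal_orthogonal_eq_closure _).symm
      _ = (⨅ n : ℕ, (LinearMap.range ((Vop ^ n : H →L[ℂ] H) : H →ₗ[ℂ] H))ᗮᗮ)ᗮ := by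
          rw [Submodule.iInf_orthogonal]
      _ = HUᗮ := by
          rw [hHUdef]
          exact congrArg _ (iInf_congr hKn)
  constructor
  · intro v
    refine ⟨⟨hSU v, ?_⟩, ?_⟩
    · rw [hSsa]; exact hSU v
    · rw [hHS]
      exact reducesOp_orthogonal (hSU v) (by rw [hSsa]; exact hSU v)
  · intro e
    refine ⟨⟨hTU e, hTUadj e⟩, ?_⟩
    rw [hHS]
    exact reducesOp_orthogonal (hTU e) (hTUadj e)
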